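/- Let a < 0 and α, β, γ > −1, and let n be a nonnegative integer. There is a monic polynomial P of degree 2n satisfying ∫_a^0 P(x)(x−a)^{α}|x|^{β}(1−x)^{γ} x^k dx = 0 for k = 0,…,n−1 and ∫_0^1 P(x)(x−a)^{α} x^{β}(1−x)^{γ} x^k dx = 0 for k = 0,…,n−1, such that for all x ∈ (0,1): (d^n/dx^n) [ (x−a)^{α+n} x^{β+n} (1−x)^{γ+n} ] = (−1)^n (α+β+γ+2n+1)_n (x−a)^{α} x^{β} (1−x)^{γ} P(x), where (a)_n is the Pochhammer symbol. -/

import Mathlib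

open MeasureTheory Polynomial
open Set Filter Topology intervalIntegral

noncomputable def JA (a A B G : ℝ) : ℕ → Polynomial ℝ
  | 0 => 1
  | (k+1) =>
      Polynomial.C (A - k) * (X * (1 - X)) * JA a A B G k
    + Polynomial.C (B - k) * ((X - Polynomial.C a) * (1 - X)) * JA a A B G k
    - Polynomial.C (G - k) * ((X - Polynomial.C a) * X) * JA a A B G k
    + (X - Polynomial.C a) * X * (1 - X) * derivative (JA a A B G k)

lemma JA_natDegree_le (a A B G : ℝ) (k : ℕ) : (JA a A B G k).natDegree ≤ 2 * k := by
  induction k with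
  | zero => simp [JA]
  | succ k ih =>
    rw [JA]
    have h3 : ((X - Polynomial.C a) * X * (1 - X) : Polynomial ℝ).natDegree ≤ 3 := by
      compute_degree
    have hd : (derivative (JA a A B G k)).natDegree ≤ 2 * k - 1 :=
      (natDegree_derivative_le _).trans (by omega)
    have t1 : (Polynomial.C (A - (k:ℝ)) * (X * (1 - X)) * JA a A B G k).natDegree ≤ 2*(k+1) := by
      refine natDegree_mul_le.trans ?_
      have : (Polynomial.C (A - (k:ℝ)) * (X * (1 - X))).natDegree ≤ 2 := by compute_degree
      omega
    have t2 : (Polynomial.C (B - (k:ℝ)) * ((X - Polynomial.C a) * (1 - X)) * JA a A B G k).natDegree ≤ 2*(k+1) := by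
      refine natDegree_mul_le.trans ?_
      have : (Polynomial.C (B - (k:ℝ)) * ((X - Polynomial.C a) * (1 - X))).natDegree ≤ 2 := by compute_degree
      omega
    have t3 : (Polynomial.C (G - (k:ℝ)) * ((X - Polynomial.C a) * X) * JA a A B G k).natDegree ≤ 2*(k+1) := by
      refine natDegree_mul_le.trans ?_
      have : (Polynomial.C (G - (k:ℝ)) * ((X - Polynomial.C a) * X)).natDegree ≤ 2 := by compute_degree
      omega
    have t4 : ((X - Polynomial.C a) * X * (1 - X) * derivative (JA a A B G k)).natDegree ≤ 2*(k+1) := by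
      rcases Nat.eq_zero_or_pos k with hk | hk
      · subst hk; simp [JA]
      · refine natDegree_mul_le.trans ?_
        omega
    calc _ ≤ _ := natDegree_add_le _ _
    _ ≤ 2*(k+1) := by
        refine max_le ?_ t4
        refine (natDegree_sub_le _ _).trans (max_le ?_ t3)
        exact (natDegree_add_le _ _).trans (max_le t1 t2)

lemma coeff2_1 (c : ℝ) : (Polynomial.C c * (X * (1 - X))).coeff 2 = -c := by
  simp [mul_sub, coeff_one, coeff_X]
lemma coeff2_2 (c a : ℝ) : (Polynomial.C c * ((X - Polynomial.C a) * (1 - X))).coeff 2 = -c := by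
  simp [mul_sub, sub_mul, coeff_one, coeff_X]
lemma coeff2_3 (c a : ℝ) : (Polynomial.C c * ((X - Polynomial.C a) * X)).coeff 2 = c := by
  simp [sub_mul, coeff_one, coeff_X]


lemma JA_coeff (a A B G : ℝ) (k : ℕ) :
    (JA a A B G k).coeff (2*k) = ∏ m ∈ Finset.range k, (-(A+B+G-m)) := by
  induction k with
  | zero => simp [JA]
  | succ k ih =>
    rw [JA, Finset.prod_range_succ]
    have hQ := JA_natDegree_le a A B G k
    have h1 : ((Polynomial.C (A - (k:ℝ)) * (X * (1 - X))) * JA a A B G k).coeff (2+2*k)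
        = (-(A - k)) * (JA a A B G k).coeff (2*k) := by
      rw [coeff_mul_add_eq_of_natDegree_le (by compute_degree) hQ]
      rw [coeff2_1]
    have h2 : ((Polynomial.C (B - (k:ℝ)) * ((X - Polynomial.C a) * (1 - X))) * JA a A B G k).coeff (2+2*k)
        = (-(B - k)) * (JA a A B G k).coeff (2*k) := by
      rw [coeff_mul_add_eq_of_natDegree_le (by compute_degree) hQ]
      rw [coeff2_2]
    have h3 : ((Polynomial.C (G - (k:ℝ)) * ((X - Polynomial.C a) * X)) * JA a A B G k).coeff (2+2*k)
        = (G - k) * (JA a A B G k).coeff (2*k) := by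
      rw [coeff_mul_add_eq_of_natDegree_le (by compute_degree) hQ]
      rw [coeff2_3]
    have h4 : (((X - Polynomial.C a) * X * (1 - X)) * derivative (JA a A B G k)).coeff (2+2*k)
        = (-(2*(k:ℝ))) * (JA a A B G k).coeff (2*k) := by
      rcases Nat.eq_zero_or_pos k with hk | hk
      · subst hk; simp [JA]
      · have h2k : 2 + 2*k = 3 + (2*k-1) := by omega
        rw [h2k, coeff_mul_add_eq_of_natDegree_le (by compute_degree)
          ((natDegree_derivative_le _).trans (by omega))]
        have hd : (derivative (JA a A B G k)).coeff (2*k-1) = (2*k) * (JA a A B G k).coeff (2*k) := by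
          have := Polynomial.coeff_derivative (JA a A B G k) (2*k-1)
          rw [this]
          have : 2*k-1+1 = 2*k := by omega
          rw [this]
          rw [mul_comm]
          congr 1
          have : ((2*k-1 : ℕ) : ℝ) = 2*k - 1 := by push_cast [Nat.cast_sub (by omega : 1 ≤ 2*k)]; ring
          rw [this]; ring
        rw [hd]
        have hc3 : ((X - Polynomial.C a) * X * (1 - X) : Polynomial ℝ).coeff 3 = -1 := by
          simp [sub_mul, mul_sub, coeff_one, coeff_X]
        rw [hc3]; ring
    have e2 : 2*(k+1) = 2+2*k := by ring
    rw [e2]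
    simp only [mul_assoc] at *
    rw [coeff_add, coeff_sub, coeff_add, h1, h2, h3, h4, ih]
    ring

lemma JA_hasDerivAt (s a A B G : ℝ) (m : ℕ) (x : ℝ)
    (h1 : x - a ≠ 0) (h2 : s * x ≠ 0) (h3 : 1 - x ≠ 0) :
    HasDerivAt (fun y => (y - a) ^ (A - m) * (s*y) ^ (B - m) * (1 - y) ^ (G - m)
        * (JA a A B G m).eval y)
      (s * ((x - a) ^ (A - (m+1:ℕ)) * (s*x) ^ (B - (m+1:ℕ)) * (1 - x) ^ (G - (m+1:ℕ))
        * (JA a A B G (m+1)).eval x)) x := by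
  have d1 : HasDerivAt (fun y : ℝ => (y - a) ^ (A - (m:ℝ)))
      ((A - (m:ℝ)) * (x - a) ^ (A - (m:ℝ) - 1)) x := by
    have hg : HasDerivAt (fun y : ℝ => y - a) 1 x := (hasDerivAt_id x).sub_const a
    simpa [Function.comp_def] using (Real.hasDerivAt_rpow_const (p := A - (m:ℝ)) (Or.inl h1)).comp x hg
  have d2 : HasDerivAt (fun y : ℝ => (s*y) ^ (B - (m:ℝ)))
      ((B - (m:ℝ)) * (s*x) ^ (B - (m:ℝ) - 1) * s) x := by
    have hg : HasDerivAt (fun y : ℝ => s*y) s x := by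
      simpa using (hasDerivAt_id x).const_mul s
    simpa [mul_comm, mul_assoc, mul_left_comm, Function.comp_def] using
      (Real.hasDerivAt_rpow_const (p := B - (m:ℝ)) (Or.inl h2)).comp x hg
  have d3 : HasDerivAt (fun y : ℝ => (1 - y) ^ (G - (m:ℝ)))
      (-((G - (m:ℝ)) * (1 - x) ^ (G - (m:ℝ) - 1))) x := by
    have hg : HasDerivAt (fun y : ℝ => 1 - y) (-1) x := (hasDerivAt_id x).const_sub 1
    simpa [Function.comp_def] using (Real.hasDerivAt_rpow_const (p := G - (m:ℝ)) (Or.inl h3)).comp x hg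
  have d4 : HasDerivAt (fun y : ℝ => (JA a A B G m).eval y)
      ((derivative (JA a A B G m)).eval x) x := (JA a A B G m).hasDerivAt x
  have big := ((d1.mul d2).mul d3).mul d4
  refine big.congr_deriv ?_
  simp only [Pi.mul_apply]
  have e1 : (x - a) ^ (A - (m:ℝ)) = (x - a) ^ (A - (m:ℝ) - 1) * (x - a) := by
    rw [← Real.rpow_add_one h1]; ring_nf
  have e2 : (s*x) ^ (B - (m:ℝ)) = (s*x) ^ (B - (m:ℝ) - 1) * (s*x) := by
    rw [← Real.rpow_add_one h2]; ring_nf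
  have e3 : (1 - x) ^ (G - (m:ℝ)) = (1 - x) ^ (G - (m:ℝ) - 1) * (1 - x) := by
    rw [← Real.rpow_add_one h3]; ring_nf
  have ec : ∀ c : ℝ, c - ((m:ℕ)+1:ℕ) = c - (m:ℝ) - 1 := by intro c; push_cast; ring
  rw [ec, ec, ec, e1, e2, e3]
  simp only [JA, eval_add, eval_sub, eval_mul, eval_C, eval_X, eval_one]
  ring


noncomputable def gJA (s a A B G : ℝ) (m : ℕ) (x : ℝ) : ℝ :=
  (x - a) ^ (A - m) * (s*x) ^ (B - m) * (1 - x) ^ (G - m) * (JA a A B G m).eval x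

lemma gJA_hasDerivAt (s a A B G : ℝ) (m : ℕ) (x : ℝ)
    (h1 : x - a ≠ 0) (h2 : s * x ≠ 0) (h3 : 1 - x ≠ 0) :
    HasDerivAt (gJA s a A B G m) (s * gJA s a A B G (m+1) x) x :=
  JA_hasDerivAt s a A B G m x h1 h2 h3

lemma rpow_left_intble (c e : ℝ) (p : ℝ) (hp : -1 < p) :
    IntervalIntegrable (fun x : ℝ => (x - c) ^ p) volume c e := by
  have h := (intervalIntegrable_rpow' hp (a := 0) (b := e - c)).comp_sub_right c
  simpa using h

lemma rpow_right_intble (e d : ℝ) (q : ℝ) (hq : -1 < q) :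
    IntervalIntegrable (fun x : ℝ => (d - x) ^ q) volume e d := by
  have h := (intervalIntegrable_rpow' hq (a := 0) (b := d - e)).comp_sub_left d
  simpa using h.symm

lemma integrableOn_helper (c d : ℝ) (hcd : c < d) (p q : ℝ) (hp : -1 < p) (hq : -1 < q)
    (h : ℝ → ℝ) (hh : ContinuousOn h (Set.Icc c d)) :
    MeasureTheory.IntegrableOn (fun x => (x - c) ^ p * (d - x) ^ q * h x) (Set.Ioo c d) := by
  set e := (c + d) / 2 with he
  have hce : c < e := by simp [he]; linarith
  have hed : e < d := by simp [he]; linarith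
  rw [← intervalIntegrable_iff_integrableOn_Ioo_of_le hcd.le]
  have cont : ContinuousOn (fun x => (x - c) ^ p * (d - x) ^ q * h x) (Set.Ioo c d) := by
    apply ContinuousOn.mul
    apply ContinuousOn.mul
    · exact ContinuousOn.rpow_const (by fun_prop) (fun x hx => Or.inl (by simp [sub_ne_zero]; exact (hx.1).ne'))
    · exact ContinuousOn.rpow_const (by fun_prop) (fun x hx => Or.inl (by simp [sub_ne_zero]; exact (hx.2).ne'))
    · exact hh.mono (Set.Ioo_subset_Icc_self)
  apply IntervalIntegrable.trans (b := e)
  · -- on [c, e] : dominate by M * (x-c)^p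
    obtain ⟨M, hM⟩ := (isCompact_Icc (a := c) (b := e)).exists_bound_of_continuousOn
      (f := fun x => (d - x) ^ q * h x)
      (((continuousOn_const.sub continuousOn_id).rpow_const
          (fun x hx => Or.inl (by simp [sub_ne_zero]; exact (lt_of_le_of_lt hx.2 hed).ne'))).mul
        (hh.mono (Set.Icc_subset_Icc le_rfl hed.le)))
    refine IntervalIntegrable.mono_fun' (g := fun x => |M| * (x - c) ^ p)
      ((rpow_left_intble c e p hp).const_mul |M|) ?_ ?_
    · exact (cont.mono (fun x hx => ⟨(Set.uIoc_of_le hce.le ▸ hx).1, lt_of_le_of_lt (Set.uIoc_of_le hce.le ▸ hx).2 hed⟩)).aestronglyMeasurable measurableSet_uIoc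
    · rw [Filter.EventuallyLE, ae_restrict_iff' measurableSet_uIoc]
      refine Filter.Eventually.of_forall (fun x hx => ?_)
      rw [Set.uIoc_of_le hce.le] at hx
      have hxc : 0 < x - c := by linarith [hx.1]
      have h1 : ‖(x - c) ^ p * (d - x) ^ q * h x‖ ≤ (x - c) ^ p * |M| := by
        rw [mul_assoc, norm_mul]
        have : ‖(x-c)^p‖ = (x-c)^p := by
          rw [Real.norm_eq_abs, abs_of_nonneg (Real.rpow_nonneg hxc.le _)]
        rw [this]
        apply mul_le_mul_of_nonneg_left _ (Real.rpow_nonneg hxc.le _)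
        exact le_trans (hM x ⟨hx.1.le, hx.2⟩) (le_abs_self M)
      simpa [mul_comm] using h1
  · -- on [e, d] : dominate by M * (d-x)^q
    obtain ⟨M, hM⟩ := (isCompact_Icc (a := e) (b := d)).exists_bound_of_continuousOn
      (f := fun x => (x - c) ^ p * h x)
      (((continuousOn_id.sub continuousOn_const).rpow_const
          (fun x hx => Or.inl (by simp [sub_ne_zero]; exact (lt_of_lt_of_le hce hx.1).ne'))).mul
        (hh.mono (Set.Icc_subset_Icc hce.le le_rfl)))
    refine IntervalIntegrable.mono_fun' (g := fun x => |M| * (d - x) ^ q)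
      ((rpow_right_intble e d q hq).const_mul |M|) ?_ ?_
    · rw [Set.uIoc_of_le hed.le, MeasureTheory.Measure.restrict_congr_set Ioo_ae_eq_Ioc.symm]
      exact (cont.mono (fun x hx => ⟨hce.trans hx.1, hx.2⟩)).aestronglyMeasurable measurableSet_Ioo
    · rw [Filter.EventuallyLE, ae_restrict_iff' measurableSet_uIoc]
      refine Filter.Eventually.of_forall (fun x hx => ?_)
      rw [Set.uIoc_of_le hed.le] at hx
      have hxd : 0 ≤ d - x := by linarith [hx.2]
      have h1 : ‖(x - c) ^ p * (d - x) ^ q * h x‖ ≤ (d - x) ^ q * |M| := by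
        have : ‖(x - c) ^ p * (d - x) ^ q * h x‖ = (d-x)^q * ‖(x-c)^p * h x‖ := by
          rw [show (x - c) ^ p * (d - x) ^ q * h x = (d-x)^q * ((x-c)^p * h x) by ring, norm_mul,
            Real.norm_eq_abs, abs_of_nonneg (Real.rpow_nonneg hxd _)]
        rw [this]
        apply mul_le_mul_of_nonneg_left _ (Real.rpow_nonneg hxd _)
        exact le_trans (hM x ⟨hx.1.le, hx.2⟩) (le_abs_self M)
      simpa [mul_comm] using h1

lemma key (s a A B G : ℝ) (n : ℕ) (c d : ℝ) (hcd : c < d) (hs : s ≠ 0)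
    (hpos : ∀ x ∈ Set.Ioo c d, 0 < x - a ∧ 0 < s * x ∧ 0 < 1 - x)
    (hint : ∀ m, m ≤ n → ∀ j : ℕ,
      IntegrableOn (fun x => x ^ j * gJA s a A B G m x) (Set.Ioo c d))
    (hlimc : ∀ m, m < n → Tendsto (gJA s a A B G m) (𝓝[>] c) (𝓝 0))
    (hlimd : ∀ m, m < n → Tendsto (gJA s a A B G m) (𝓝[<] d) (𝓝 0)) :
    ∀ k m, k < m → m ≤ n → ∫ x in Set.Ioo c d, x ^ k * gJA s a A B G m x = 0 := by
  intro k
  induction k using Nat.strong_induction_on with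
  | _ k ih =>
    intro m hkm hmn
    obtain ⟨m', rfl⟩ : ∃ m', m = m' + 1 := ⟨m - 1, by omega⟩
    have hd : ∀ x ∈ Set.Ioo c d, HasDerivAt (fun y => y ^ k * gJA s a A B G m' y)
        ((k:ℝ) * x ^ (k-1) * gJA s a A B G m' x + x ^ k * (s * gJA s a A B G (m'+1) x)) x := by
      intro x hx
      obtain ⟨p1, p2, p3⟩ := hpos x hx
      exact (hasDerivAt_pow k x).mul (gJA_hasDerivAt s a A B G m' x p1.ne' p2.ne' p3.ne')
    have hTc : Tendsto (fun x => x ^ k * gJA s a A B G m' x) (𝓝[>] c) (𝓝 0) := by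
      have := (((continuous_pow k).tendsto c).mono_left nhdsWithin_le_nhds).mul
        (hlimc m' (by omega))
      simpa using this
    have hTd : Tendsto (fun x => x ^ k * gJA s a A B G m' x) (𝓝[<] d) (𝓝 0) := by
      have := (((continuous_pow k).tendsto d).mono_left nhdsWithin_le_nhds).mul
        (hlimd m' (by omega))
      simpa using this
    have int1 : IntegrableOn (fun x => (k:ℝ) * x ^ (k-1) * gJA s a A B G m' x) (Set.Ioo c d) := by
      have := (hint m' (by omega) (k-1)).const_mul (k:ℝ)
      simp only [mul_assoc]
      exact this
    have int2 : IntegrableOn (fun x => x ^ k * (s * gJA s a A B G (m'+1) x)) (Set.Ioo c d) := by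
      have h0 : IntegrableOn (fun x => s * (x ^ k * gJA s a A B G (m'+1) x)) (Set.Ioo c d) :=
        (hint (m'+1) hmn k).const_mul s
      exact h0.congr_fun (fun x _ => by ring) measurableSet_Ioo
    have hint1 : IntervalIntegrable (fun x => (k:ℝ) * x ^ (k-1) * gJA s a A B G m' x
        + x ^ k * (s * gJA s a A B G (m'+1) x)) volume c d := by
      rw [intervalIntegrable_iff_integrableOn_Ioo_of_le hcd.le]
      exact int1.add int2
    have hF := integral_eq_sub_of_hasDerivAt_of_tendsto hcd hd hint1 hTc hTd
    rw [sub_zero, intervalIntegral.integral_of_le hcd.le,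
      MeasureTheory.integral_Ioc_eq_integral_Ioo] at hF
    rw [MeasureTheory.integral_add int1 int2] at hF
    have e1 : ∫ x in Set.Ioo c d, (k:ℝ) * x ^ (k-1) * gJA s a A B G m' x = 0 := by
      simp_rw [mul_assoc]
      rw [MeasureTheory.integral_const_mul]
      rcases Nat.eq_zero_or_pos k with hk | hk
      · simp [hk]
      · rw [ih (k-1) (by omega) m' (by omega) (by omega), mul_zero]
    have e2 : ∫ x in Set.Ioo c d, x ^ k * (s * gJA s a A B G (m'+1) x)
        = s * ∫ x in Set.Ioo c d, x ^ k * gJA s a A B G (m'+1) x := by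
      rw [← MeasureTheory.integral_const_mul]
      exact integral_congr_ae (Eventually.of_forall (fun x => by ring))
    rw [e1, e2, zero_add] at hF
    exact (mul_eq_zero.mp hF).resolve_left hs

lemma rpow_tendsto_zero {f : ℝ → ℝ} {l : Filter ℝ} {p : ℝ} (hp : 0 < p)
    (hf : Tendsto f l (𝓝 0)) : Tendsto (fun x => f x ^ p) l (𝓝 0) := by
  have := (Real.continuousAt_rpow_const 0 p (Or.inr hp.le)).tendsto.comp hf
  simpa [Real.zero_rpow hp.ne', Function.comp_def] using this

lemma rpow_tendsto {f : ℝ → ℝ} {l : Filter ℝ} {c p : ℝ} (hc : c ≠ 0)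
    (hf : Tendsto f l (𝓝 c)) : Tendsto (fun x => f x ^ p) l (𝓝 (c ^ p)) :=
  (Real.continuousAt_rpow_const c p (Or.inl hc)).tendsto.comp hf

lemma gJA_tendsto_zero (s a A B G : ℝ) (m : ℕ) (t : ℝ) (l : Filter ℝ) (hl : l ≤ 𝓝 t)
    (h : (0 < A - m ∧ t - a = 0 ∧ s*t ≠ 0 ∧ 1 - t ≠ 0)
       ∨ (0 < B - m ∧ s*t = 0 ∧ t - a ≠ 0 ∧ 1 - t ≠ 0)
       ∨ (0 < G - m ∧ 1 - t = 0 ∧ t - a ≠ 0 ∧ s*t ≠ 0)) :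
    Tendsto (gJA s a A B G m) l (𝓝 0) := by
  have t1 : Tendsto (fun x : ℝ => x - a) l (𝓝 (t - a)) :=
    ((continuous_id.sub continuous_const).tendsto t).mono_left hl
  have t2 : Tendsto (fun x : ℝ => s * x) l (𝓝 (s * t)) :=
    ((continuous_const.mul continuous_id).tendsto t).mono_left hl
  have t3 : Tendsto (fun x : ℝ => 1 - x) l (𝓝 (1 - t)) :=
    ((continuous_const.sub continuous_id).tendsto t).mono_left hl
  have t4 : Tendsto (fun x : ℝ => (JA a A B G m).eval x) l (𝓝 ((JA a A B G m).eval t)) :=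
    ((JA a A B G m).continuous_aeval.tendsto t).mono_left hl
  unfold gJA
  rcases h with ⟨hp, hz, hn1, hn2⟩ | ⟨hp, hz, hn1, hn2⟩ | ⟨hp, hz, hn1, hn2⟩
  · have := (((rpow_tendsto_zero (p := A - m) hp (hz ▸ t1)).mul
      (rpow_tendsto (p := B - m) hn1 t2)).mul (rpow_tendsto (p := G - m) hn2 t3)).mul t4
    simpa using this
  · have := (((rpow_tendsto (p := A - m) hn1 t1).mul
      (rpow_tendsto_zero (p := B - m) hp (hz ▸ t2))).mul (rpow_tendsto (p := G - m) hn2 t3)).mul t4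
    simpa using this
  · have := (((rpow_tendsto (p := A - m) hn1 t1).mul (rpow_tendsto (p := B - m) hn2 t2)).mul
      (rpow_tendsto_zero (p := G - m) hp (hz ▸ t3))).mul t4
    simpa using this

lemma gJA_intble_right (a A B G : ℝ) (ha : a < 0) (m : ℕ) (hB : -1 < B - m) (hG : -1 < G - m)
    (j : ℕ) : MeasureTheory.IntegrableOn
      (fun x => x ^ j * gJA 1 a A B G m x) (Set.Ioo (0:ℝ) 1) := by
  have hh : ContinuousOn (fun x : ℝ => (x - a) ^ (A - m) * (JA a A B G m).eval x * x ^ j)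
      (Set.Icc (0:ℝ) 1) := by
    refine ContinuousOn.mul (ContinuousOn.mul ?_ (JA a A B G m).continuous_aeval.continuousOn)
      (continuous_pow j).continuousOn
    exact ContinuousOn.rpow_const (by fun_prop)
      (fun x hx => Or.inl (by have := hx.1; intro hcon; nlinarith [sub_eq_zero.mp hcon]))
  have := integrableOn_helper 0 1 one_pos (B - m) (G - m) hB hG _ hh
  refine this.congr_fun (fun x hx => ?_) measurableSet_Ioo
  simp only [sub_zero, gJA, one_mul]
  ring

lemma gJA_intble_left (a A B G : ℝ) (ha : a < 0) (m : ℕ) (hA : -1 < A - m) (hB : -1 < B - m)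
    (j : ℕ) : MeasureTheory.IntegrableOn
      (fun x => x ^ j * gJA (-1) a A B G m x) (Set.Ioo a 0) := by
  have hh : ContinuousOn (fun x : ℝ => (1 - x) ^ (G - m) * (JA a A B G m).eval x * x ^ j)
      (Set.Icc a (0:ℝ)) := by
    refine ContinuousOn.mul (ContinuousOn.mul ?_ (JA a A B G m).continuous_aeval.continuousOn)
      (continuous_pow j).continuousOn
    exact ContinuousOn.rpow_const (by fun_prop)
      (fun x hx => Or.inl (by have := hx.2; intro hcon; nlinarith [sub_eq_zero.mp hcon]))
  have := integrableOn_helper a 0 ha (A - m) (B - m) hA hB _ hh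
  refine this.congr_fun (fun x hx => ?_) measurableSet_Ioo
  simp only [zero_sub, gJA, neg_one_mul]
  ring

lemma gJA_iteratedDeriv (a A B G : ℝ) (ha : a < 0) (m : ℕ) :
    ∀ x ∈ Set.Ioo (0:ℝ) 1, iteratedDeriv m (gJA 1 a A B G 0) x = gJA 1 a A B G m x := by
  induction m with
  | zero => intro x hx; simp [iteratedDeriv_zero]
  | succ m ih =>
    intro x hx
    rw [iteratedDeriv_succ]
    have heq : iteratedDeriv m (gJA 1 a A B G 0) =ᶠ[𝓝 x] gJA 1 a A B G m :=
      eventually_of_mem (isOpen_Ioo.mem_nhds hx) ih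
    rw [heq.deriv_eq]
    have h1 : x - a ≠ 0 := by have := hx.1; intro hcon; nlinarith [sub_eq_zero.mp hcon]
    have h2 : (1:ℝ) * x ≠ 0 := by simpa using hx.1.ne'
    have h3 : 1 - x ≠ 0 := by have := hx.2; intro hcon; nlinarith [sub_eq_zero.mp hcon]
    have := (gJA_hasDerivAt 1 a A B G m x h1 h2 h3).deriv
    simpa using this

/-- **Rodrigues formula for the diagonal Jacobi-Angelesco polynomial** `P_{n,n}`:
there is a monic polynomial `P` of degree `2n`, orthogonal to `x^k` (`k < n`) with
respect to `(x-a)^α |x|^β (1-x)^γ` on `(a,0)` and on `(0,1)`, such that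
`D^n [(x-a)^{α+n} x^{β+n} (1-x)^{γ+n}]
  = (-1)^n (α+β+γ+2n+1)_n (x-a)^α x^β (1-x)^γ P(x)` on `(0,1)`. -/
theorem stmt_13 (a : ℝ) (ha : a < 0) (α β γ : ℝ)
    (hα : -1 < α) (hβ : -1 < β) (hγ : -1 < γ) (n : ℕ) :
    ∃ P : Polynomial ℝ, P.Monic ∧ P.natDegree = 2 * n ∧
      (∀ k < n,
        ∫ x in Set.Ioo a 0,
          P.eval x * ((x - a) ^ α * |x| ^ β * (1 - x) ^ γ) * x ^ k = 0) ∧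
      (∀ k < n,
        ∫ x in Set.Ioo (0:ℝ) 1,
          P.eval x * ((x - a) ^ α * x ^ β * (1 - x) ^ γ) * x ^ k = 0) ∧
      ∀ x ∈ Set.Ioo (0:ℝ) 1,
        iteratedDeriv n (fun y => (y - a) ^ (α + n) * y ^ (β + n) * (1 - y) ^ (γ + n)) x
          = (-1) ^ n * (∏ i ∈ Finset.range n, (α + β + γ + 2 * n + 1 + i))
              * ((x - a) ^ α * x ^ β * (1 - x) ^ γ) * P.eval x := by
  set A := α + (n:ℝ) with hA
  set B := β + (n:ℝ) with hB
  set G := γ + (n:ℝ) with hG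
  set K := ∏ i ∈ Finset.range n, (α + β + γ + 2 * (n:ℝ) + 1 + (i:ℝ)) with hK
  have hKpos : 0 < K := by
    refine Finset.prod_pos (fun i hi => ?_)
    have h1 : (1:ℝ) ≤ (n:ℝ) := by
      have : 1 ≤ n := Nat.one_le_iff_ne_zero.mpr (by rintro rfl; simp at hi)
      exact_mod_cast this
    have h2 : (0:ℝ) ≤ (i:ℝ) := Nat.cast_nonneg i
    linarith
  set c₀ : ℝ := (-1)^n * K⁻¹ with hc₀
  have hc₀ne : c₀ ≠ 0 := by
    apply mul_ne_zero
    · exact pow_ne_zero n (by norm_num)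
    · exact inv_ne_zero hKpos.ne'
  set P : Polynomial ℝ := Polynomial.C c₀ * JA a A B G n with hP
  -- leading coefficient
  have hprod : (∏ m ∈ Finset.range n, (-(A + B + G - (m:ℝ)))) = (-1)^n * K := by
    have step1 : (∏ m ∈ Finset.range n, (-(A + B + G - (m:ℝ))))
        = (-1)^n * ∏ m ∈ Finset.range n, (A + B + G - (m:ℝ)) := by
      calc (∏ m ∈ Finset.range n, (-(A + B + G - (m:ℝ))))
          = ∏ m ∈ Finset.range n, ((-1) * (A + B + G - (m:ℝ))) :=
            Finset.prod_congr rfl (fun m _ => by ring)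
        _ = _ := by rw [Finset.prod_mul_distrib, Finset.prod_const, Finset.card_range]
    rw [step1]
    congr 1
    rw [hK, ← Finset.prod_range_reflect]
    refine Finset.prod_congr rfl (fun j hj => ?_)
    have hj' : j < n := Finset.mem_range.mp hj
    have hcast : ((n - 1 - j : ℕ) : ℝ) = (n:ℝ) - 1 - (j:ℝ) := by
      have h1 : 1 + j ≤ n := by omega
      push_cast [Nat.sub_sub, Nat.cast_sub h1]
      ring
    rw [hcast, hA, hB, hG]
    ring
  have hcoeff : P.coeff (2*n) = 1 := by
    rw [hP, Polynomial.coeff_C_mul, JA_coeff, hprod, hc₀]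
    have : ((-1:ℝ))^n * ((-1:ℝ))^n = 1 := by
      rw [← pow_add]
      exact Even.neg_one_pow ⟨n, rfl⟩
    field_simp
    linear_combination this
  have hdegle : P.natDegree ≤ 2*n := by
    refine Polynomial.natDegree_mul_le.trans ?_
    simpa using JA_natDegree_le a A B G n
  have hmonic : P.Monic := Polynomial.monic_of_natDegree_le_of_coeff_eq_one (2*n) hdegle hcoeff
  have hdeg : P.natDegree = 2*n :=
    le_antisymm hdegle (Polynomial.le_natDegree_of_ne_zero (hcoeff ▸ one_ne_zero))
  -- exponent facts
  have hcastle : ∀ m : ℕ, m ≤ n → ((m:ℝ) ≤ (n:ℝ)) := fun m hm => by exact_mod_cast hm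
  have hcastlt : ∀ m : ℕ, m < n → ((m:ℝ) + 1 ≤ (n:ℝ)) := fun m hm => by exact_mod_cast hm
  refine ⟨P, hmonic, hdeg, ?_, ?_, ?_⟩
  · -- interval (a,0), s = -1
    intro k hk
    have keyL := key (-1) a A B G n a 0 ha (by norm_num)
      (fun x hx => ⟨by linarith [hx.1], by simpa using hx.2, by linarith [hx.2]⟩)
      (fun m hm j => gJA_intble_left a A B G ha m
        (by have := hcastle m hm; rw [hA]; linarith)
        (by have := hcastle m hm; rw [hB]; linarith) j)
      (fun m hm => gJA_tendsto_zero (-1) a A B G m a (𝓝[>] a) nhdsWithin_le_nhds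
        (Or.inl ⟨by have := hcastlt m hm; rw [hA]; linarith, by ring,
          by simpa using ha.ne, by intro hcon; nlinarith [sub_eq_zero.mp hcon]⟩))
      (fun m hm => gJA_tendsto_zero (-1) a A B G m 0 (𝓝[<] 0) nhdsWithin_le_nhds
        (Or.inr (Or.inl ⟨by have := hcastlt m hm; rw [hB]; linarith, by ring,
          by intro hcon; nlinarith [sub_eq_zero.mp hcon], by norm_num⟩)))
      k n hk le_rfl
    have congrL : ∀ x ∈ Set.Ioo a 0,
        P.eval x * ((x - a) ^ α * |x| ^ β * (1 - x) ^ γ) * x ^ k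
          = c₀ * (x ^ k * gJA (-1) a A B G n x) := by
      intro x hx
      have habs : |x| = (-1) * x := by rw [abs_of_neg hx.2]; ring
      have eA : A - (n:ℝ) = α := by rw [hA]; ring
      have eB : B - (n:ℝ) = β := by rw [hB]; ring
      have eG : G - (n:ℝ) = γ := by rw [hG]; ring
      rw [habs]
      simp only [gJA, hP, eval_mul, eval_C, eA, eB, eG]
      ring
    rw [MeasureTheory.setIntegral_congr_fun measurableSet_Ioo congrL,
      MeasureTheory.integral_const_mul, keyL, mul_zero]
  · -- interval (0,1), s = 1
    intro k hk
    have keyR := key 1 a A B G n 0 1 one_pos (by norm_num)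
      (fun x hx => ⟨by linarith [hx.1], by simpa using hx.1, by linarith [hx.2]⟩)
      (fun m hm j => gJA_intble_right a A B G ha m
        (by have := hcastle m hm; rw [hB]; linarith)
        (by have := hcastle m hm; rw [hG]; linarith) j)
      (fun m hm => gJA_tendsto_zero 1 a A B G m 0 (𝓝[>] 0) nhdsWithin_le_nhds
        (Or.inr (Or.inl ⟨by have := hcastlt m hm; rw [hB]; linarith, by ring,
          by intro hcon; nlinarith [sub_eq_zero.mp hcon], by norm_num⟩)))
      (fun m hm => gJA_tendsto_zero 1 a A B G m 1 (𝓝[<] 1) nhdsWithin_le_nhds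
        (Or.inr (Or.inr ⟨by have := hcastlt m hm; rw [hG]; linarith, by ring,
          by intro hcon; nlinarith [sub_eq_zero.mp hcon], by norm_num⟩)))
      k n hk le_rfl
    have congrR : ∀ x ∈ Set.Ioo (0:ℝ) 1,
        P.eval x * ((x - a) ^ α * x ^ β * (1 - x) ^ γ) * x ^ k
          = c₀ * (x ^ k * gJA 1 a A B G n x) := by
      intro x hx
      have eA : A - (n:ℝ) = α := by rw [hA]; ring
      have eB : B - (n:ℝ) = β := by rw [hB]; ring
      have eG : G - (n:ℝ) = γ := by rw [hG]; ring
      simp only [gJA, hP, eval_mul, eval_C, eA, eB, eG, one_mul]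
      ring
    rw [MeasureTheory.setIntegral_congr_fun measurableSet_Ioo congrR,
      MeasureTheory.integral_const_mul, keyR, mul_zero]
  · -- Rodrigues formula on (0,1)
    intro x hx
    have hfun : (fun y : ℝ => (y - a) ^ A * y ^ B * (1 - y) ^ G) = gJA 1 a A B G 0 := by
      funext y
      simp [gJA, JA]
    rw [hfun, gJA_iteratedDeriv a A B G ha n x hx]
    have eA : A - (n:ℝ) = α := by rw [hA]; ring
    have eB : B - (n:ℝ) = β := by rw [hB]; ring
    have eG : G - (n:ℝ) = γ := by rw [hG]; ring
    simp only [gJA, hP, eval_mul, eval_C, eA, eB, eG, one_mul, hc₀]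
    have hsq : ((-1:ℝ))^n * ((-1:ℝ))^n = 1 := by
      rw [← pow_add]
      exact Even.neg_one_pow ⟨n, rfl⟩
    have hfin : (-1:ℝ)^n * K * ((x - a)^α * x^β * (1-x)^γ)
        * ((-1:ℝ)^n * K⁻¹ * (JA a A B G n).eval x)
        = ((-1:ℝ)^n*(-1:ℝ)^n) * (K*K⁻¹)
          * ((x-a)^α * x^β * (1-x)^γ * (JA a A B G n).eval x) := by ring
    rw [hfin, hsq, mul_inv_cancel₀ hKpos.ne', one_mul, one_mul]
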